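/- Set β = 1. For every indexed forest F and every i ≥ 1, there exist finitely many triples (c_1, w_1, G_1), …, (c_N, w_N, G_N), where each c_m ∈ ℤ, each w_m is a finite list of positive integers, and each G_m ∈ For, such that for every f ∈ R: Ĥ_F(R_i f) = Σ_{m=1}^N c_m · R_{w_m}(Ĥ_{G_m} f), where for a list w = (w(1), …, w(t)) the operator R_w denotes the composite R_{w(1)} ∘ ⋯ ∘ R_{w(t)}. In particular, ct(Ĥ_F(R_i f)) = Σ_{m=1}^N c_m · ct(Ĥ_{G_m} f) for every f ∈ R. -/

import Mathlib

open MvPolynomial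

/-- The ambient ring `R = ℤ[x₁, x₂, …]`, with variables indexed by positive integers. -/
abbrev MyR : Type := MvPolynomial ℕ+ ℤ

/-- The Bergeron–Sottile operator `R_i`: the `ℤ`-algebra map with
`x_j ↦ x_j` for `j < i`, `x_i ↦ 0`, and `x_j ↦ x_{j-1}` for `j > i`. -/
noncomputable def BS (i : ℕ+) : MyR →ₐ[ℤ] MyR :=
  aeval fun j : ℕ+ =>
    if j < i then (X j : MyR) else if j = i then 0 else X (j - 1)

/-- Plane binary trees. -/
inductive BTree : Type
  | leaf : BTree
  | node : BTree → BTree → BTree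
  deriving DecidableEq

namespace BTree

def numLeaves : BTree → ℕ+
  | leaf => 1
  | node l r => l.numLeaves + r.numLeaves

/-- Number of internal nodes. -/
def size : BTree → ℕ
  | leaf => 0
  | node l r => l.size + r.size + 1

/-- `qdesSet T a` : the QDes positions contributed by a tree `T` whose leftmost
leaf carries the label `a` (leaves are labeled consecutively left-to-right). -/
def qdesSet : BTree → ℕ+ → Set ℕ+
  | leaf, _ => ∅
  | node leaf leaf, a => {a}
  | node l r, a => l.qdesSet a ∪ r.qdesSet (a + l.numLeaves)

/-- `trim T a i` : replace the terminal node whose leaf-children are labeled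
`i`, `i+1` by a single leaf (`a` = label of the leftmost leaf of `T`). -/
def trim : BTree → ℕ+ → ℕ+ → BTree
  | leaf, _, _ => leaf
  | node l r, a, i =>
    if l = leaf ∧ r = leaf ∧ a = i then leaf
    else node (l.trim a i) (r.trim (a + l.numLeaves) i)

/-- `rightAt T a i = true` iff the terminal node of `T` whose leaf-children are
labeled `i`, `i+1` is the right child of its parent. -/
def rightAt : BTree → ℕ+ → ℕ+ → Bool
  | leaf, _, _ => false
  | node l r, a, i =>
    l.rightAt a i || r.rightAt (a + l.numLeaves) i ||
      (decide (r = node leaf leaf) && decide (a + l.numLeaves = i))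

end BTree

/-- An indexed forest: a sequence of plane binary trees, all but finitely many
of which are the single leaf. -/
structure IndexedForest : Type where
  trees : ℕ → BTree
  finite : {n : ℕ | trees n ≠ BTree.leaf}.Finite

namespace IndexedForest

noncomputable def supp (F : IndexedForest) : Finset ℕ := F.finite.toFinset

/-- `|F|`, the number of internal nodes of `F`. -/
noncomputable def size (F : IndexedForest) : ℕ := ∑ n ∈ F.supp, (F.trees n).size

/-- The label of the leftmost leaf of the `n`-th tree (trees indexed from `0`;
leaves are labeled `1, 2, 3, …` from left to right across the trees). -/
def firstLeaf (F : IndexedForest) (n : ℕ) : ℕ+ :=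
  ⟨1 + ∑ m ∈ Finset.range n, ((F.trees m).numLeaves : ℕ), by omega⟩

/-- `QDes(F)`. -/
def qdes (F : IndexedForest) : Set ℕ+ :=
  ⋃ n : ℕ, (F.trees n).qdesSet (F.firstLeaf n)

/-- `F/i`, the forest obtained by replacing the terminal node with leaf-children
`i`, `i+1` by a single leaf. -/
def trim (F : IndexedForest) (i : ℕ+) : IndexedForest where
  trees := fun n => (F.trees n).trim (F.firstLeaf n) i
  finite := F.finite.subset (fun n hn => by
    simp only [Set.mem_setOf_eq] at hn ⊢
    intro h
    apply hn
    rw [h]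
    rfl)

/-- The empty forest `∅`. -/
protected def empty : IndexedForest :=
  ⟨fun _ => BTree.leaf, Set.finite_empty.subset (fun _ hn => (hn rfl).elim)⟩

/-- The terminal node of `F` at `i ∈ QDes F` is a right child. -/
def rightAt (F : IndexedForest) (i : ℕ+) : Prop :=
  ∃ n : ℕ, (F.trees n).rightAt (F.firstLeaf n) i = true

open Classical in
/-- `min QDes(F)` (defaulting to `1` if `QDes(F)` is empty, i.e. `F = ∅`). -/
noncomputable def minQDes (F : IndexedForest) : ℕ+ :=
  if h : ((fun i : ℕ+ => (i : ℕ)) '' F.qdes).Nonempty then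
    ⟨sInf ((fun i : ℕ+ => (i : ℕ)) '' F.qdes), by
      obtain ⟨i, _, hieq⟩ := Nat.sInf_mem h
      exact hieq ▸ i.2⟩
  else 1

end IndexedForest

/-- Set-valued labeled plane binary trees: each internal node carries a finite
set of positive integers. -/
inductive LTree : Type
  | leaf : LTree
  | node : Finset ℕ+ → LTree → LTree → LTree

namespace LTree

/-- Underlying unlabeled tree. -/
def shape : LTree → BTree
  | leaf => BTree.leaf
  | node _ l r => BTree.node l.shape r.shape

/-- The label set of the top of a subtree; a leaf with label `a` counts as the
singleton `{a}`. -/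
def headSet : LTree → ℕ+ → Finset ℕ+
  | leaf, a => {a}
  | node S _ _, _ => S

/-- Compatibility of a set-valued labeling: every label set is nonempty,
`max κ(v) ≤ min κ(v_L)` and `max κ(v) < min κ(v_R)`.  The parameter `a` is the
label of the leftmost leaf of the subtree. -/
def Compatible : LTree → ℕ+ → Prop
  | leaf, _ => True
  | node S l r, a =>
    S.Nonempty ∧ l.Compatible a ∧ r.Compatible (a + l.shape.numLeaves) ∧
    (∀ s ∈ S, ∀ t ∈ l.headSet a, s ≤ t) ∧
    (∀ s ∈ S, ∀ t ∈ r.headSet (a + l.shape.numLeaves), s < t)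

/-- The monomial `x_κ` contributed by a labeled tree. -/
noncomputable def weight : LTree → MyR
  | leaf => 1
  | node S l r => (∏ j ∈ S, (X j : MyR)) * l.weight * r.weight

/-- `|κ|`, the total cardinality of the label sets. -/
def lsize : LTree → ℕ
  | leaf => 0
  | node S l r => S.card + l.lsize + r.lsize

/-- All label sets are singletons. -/
def allSingle : LTree → Prop
  | leaf => True
  | node S l r => S.card = 1 ∧ l.allSingle ∧ r.allSingle

end LTree

/-- The type of compatible set-valued labelings of the indexed forest `F`. -/
def IndexedForest.Labelings (F : IndexedForest) : Type :=
  {κ : ℕ → LTree //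
    (∀ n, (κ n).shape = F.trees n) ∧ ∀ n, (κ n).Compatible (F.firstLeaf n)}

/-- The grove polynomial `G_F^{(β)} = Σ_κ β^{|κ|-|F|} x_κ`. -/
noncomputable def groveP (β : ℤ) (F : IndexedForest) : MyR :=
  ∑ᶠ κ : F.Labelings,
    C (β ^ ((∑ n ∈ F.supp, (κ.1 n).lsize) - F.size)) * ∏ n ∈ F.supp, (κ.1 n).weight

/-- The forest polynomial `𝔓_F`: the sum of `x_κ` over compatible set-valued
labelings all of whose label sets are singletons. -/
noncomputable def forestPoly (F : IndexedForest) : MyR :=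
  ∑ᶠ κ : {κ : F.Labelings // ∀ n, (κ.1 n).allSingle},
    ∏ n ∈ F.supp, (κ.1.1 n).weight

open Classical in
/-- Fuel-indexed recursion implementing the grove extractor. -/
noncomputable def extractAux (T : ℕ+ → MyR → MyR) (β : ℤ) :
    ℕ → IndexedForest → MyR → MyR
  | 0, _, f => f
  | k + 1, F, f =>
    if F = IndexedForest.empty then f
    else
      extractAux T β k (F.trim F.minQDes)
        (if F.rightAt F.minQDes then (1 + C β * X F.minQDes) * T F.minQDes f
         else T F.minQDes f)

/-- The grove extractor `Ĥ_F`: `Ĥ_∅ = id`, and for `F ≠ ∅` and `i = min QDes F`,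
`Ĥ_F = Ĥ_{F/i} ∘ Ĥ^R_i` if the terminal node at `i` is a right child and
`Ĥ_F = Ĥ_{F/i} ∘ Ĥ^L_i` otherwise, where `Ĥ^L_i = T_i` and
`Ĥ^R_i = (1 + βx_i)·T_i`.  (The recursion is implemented with fuel `|F|`, using
that `|F/i| = |F| - 1`.) -/
noncomputable def extract (T : ℕ+ → MyR → MyR) (β : ℤ) (F : IndexedForest) :
    MyR → MyR :=
  extractAux T β F.size F

/-- `S_∞`: permutations of `{1, 2, …}` fixing all but finitely many points. -/
def SPerm : Type := {w : Equiv.Perm ℕ+ // {x : ℕ+ | w x ≠ x}.Finite}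

namespace SPerm

/-- The identity permutation. -/
protected def one : SPerm :=
  ⟨1, Set.finite_empty.subset (fun _ hx => (hx rfl).elim)⟩

/-- `w * s_i` where `s_i` is the transposition of `i` and `i+1`. -/
noncomputable def mulSwap (w : SPerm) (i : ℕ+) : SPerm :=
  ⟨w.1 * Equiv.swap i (i + 1), by
    apply ((w.2.union (Set.finite_singleton i)).union
      (Set.finite_singleton (i + 1))).subset
    intro x hx
    simp only [Set.mem_setOf_eq, Equiv.Perm.mul_apply] at hx
    simp only [Set.mem_union, Set.mem_setOf_eq, Set.mem_singleton_iff]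
    by_cases h1 : x = i
    · exact Or.inl (Or.inr h1)
    by_cases h2 : x = i + 1
    · exact Or.inr h2
    · exact Or.inl (Or.inl (by rwa [Equiv.swap_apply_of_ne_of_ne h1 h2] at hx))⟩

/-- `ℓ(w)`, the number of inversions. -/
noncomputable def len (w : SPerm) : ℕ :=
  Set.ncard {p : ℕ+ × ℕ+ | p.1 < p.2 ∧ w.1 p.2 < w.1 p.1}

/-- `Des(w) = {i ≥ 1 : w(i) > w(i+1)}`. -/
def des (w : SPerm) : Set ℕ+ := {i : ℕ+ | w.1 (i + 1) < w.1 i}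

end SPerm

/-- `f` is quasisymmetric in `x₁, …, xₙ`: no variable `x_j` with `j > n`
occurs, and coefficients of monomials with the same exponent word on strictly
increasing variable sequences in `{1, …, n}` agree. -/
def IsQuasisym (n : ℕ+) (f : MyR) : Prop :=
  (∀ j : ℕ+, n < j → ∀ m ∈ f.support, m j = 0) ∧
  ∀ k : ℕ, 0 < k → ∀ a : Fin k → ℕ+, ∀ u v : Fin k → ℕ+,
    StrictMono u → StrictMono v → (∀ m, u m ≤ n) → (∀ m, v m ≤ n) →
    coeff (∑ m, Finsupp.single (u m) ((a m : ℕ))) f =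
      coeff (∑ m, Finsupp.single (v m) ((a m : ℕ))) f

/-- The zigzag (chain) tree encoded by a list of booleans: the internal nodes
form a chain `v₁, …, v_k` (`k` = length + 1) and the `m`-th entry records
whether `v_{m+1}` is the right child of `v_m`. -/
def chainTree : List Bool → BTree
  | [] => BTree.node BTree.leaf BTree.leaf
  | b :: rest =>
    if b then BTree.node BTree.leaf (chainTree rest)
    else BTree.node (chainTree rest) BTree.leaf


/-! ### Auxiliary material for `stmt9` -/

namespace Stmt9Aux

open MvPolynomial

lemma exists_succ_of_lt {a j : ℕ+} (h : a < j) : ∃ j₀, a ≤ j₀ ∧ j = j₀ + 1 :=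
  ⟨j - 1, PNat.le_sub_one_of_lt h, (PNat.sub_add_of_lt (lt_of_le_of_lt a.one_le h)).symm⟩

lemma succ_le_succ {a b : ℕ+} (h : a ≤ b) : a + 1 ≤ b + 1 := add_le_add h le_rfl

lemma succ_lt_succ {a b : ℕ+} (h : a < b) : a + 1 < b + 1 := add_lt_add_of_lt_of_le h le_rfl

lemma lt_succ_self' (a : ℕ+) : a < a + 1 := PNat.lt_add_one_iff.mpr le_rfl

lemma xcancel {i : ℕ+} {a b : MyR} (h : (X i : MyR) * a = X i * b) : a = b :=
  mul_left_cancel₀ (MvPolynomial.X_ne_zero i) h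

lemma BS_X (i j : ℕ+) : BS i (X j) =
    (if j < i then (X j : MyR) else if j = i then 0 else X (j - 1)) := by
  simp [BS, aeval_X]

lemma BS_X_lt {i j : ℕ+} (h : j < i) : BS i (X j) = X j := by
  rw [BS_X, if_pos h]

lemma BS_X_self (i : ℕ+) : BS i (X i) = 0 := by
  rw [BS_X, if_neg (lt_irrefl i), if_pos rfl]

lemma BS_X_succ {i j : ℕ+} (h : i ≤ j) : BS i (X (j + 1)) = X j := by
  rw [BS_X, if_neg (by exact not_lt.mpr (le_trans h (lt_succ_self' j).le)),
    if_neg (by exact fun hc => absurd (hc ▸ h) (not_le.mpr (lt_succ_self' j))), PNat.add_sub]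

/-- Identity (I): for `k ≤ i₀` : `BS k ∘ BS (i₀+1) = BS i₀ ∘ BS k`. -/
lemma BS_comp_lt {k i₀ : ℕ+} (h : k ≤ i₀) (f : MyR) :
    BS k (BS (i₀ + 1) f) = BS i₀ (BS k f) := by
  have key : (BS k).comp (BS (i₀ + 1)) = (BS i₀).comp (BS k) := by
    apply MvPolynomial.algHom_ext
    intro j
    simp only [AlgHom.comp_apply]
    rcases lt_trichotomy j k with hjk | hjk | hjk
    · have hji : j < i₀ := lt_of_lt_of_le hjk h
      simp only [BS_X_lt hjk, BS_X_lt (hji.trans (lt_succ_self' i₀)), BS_X_lt hji]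
    · subst hjk
      simp only [BS_X_self, map_zero, BS_X_lt (lt_of_le_of_lt h (lt_succ_self' i₀))]
    · obtain ⟨j₀, hkj₀, rfl⟩ := exists_succ_of_lt hjk
      rcases lt_trichotomy j₀ i₀ with hji | hji | hji
      · simp only [BS_X_lt (succ_lt_succ hji), BS_X_succ hkj₀, BS_X_lt hji]
      · subst hji
        simp only [BS_X_self, map_zero, BS_X_succ hkj₀, BS_X_self]
      · obtain ⟨j₁, hij₁, rfl⟩ := exists_succ_of_lt hji
        simp only [BS_X_succ (succ_le_succ hij₁), BS_X_succ hkj₀,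
          BS_X_succ hij₁, BS_X_succ (le_trans h hij₁)]
  calc BS k (BS (i₀ + 1) f) = ((BS k).comp (BS (i₀ + 1))) f := rfl
    _ = ((BS i₀).comp (BS k)) f := by rw [key]
    _ = BS i₀ (BS k f) := rfl

/-- Identity (II): for `i ≤ k` : `BS k ∘ BS i = BS i ∘ BS (k+1)`. -/
lemma BS_comp_ge {i k : ℕ+} (h : i ≤ k) (f : MyR) :
    BS k (BS i f) = BS i (BS (k + 1) f) := by
  have key : (BS k).comp (BS i) = (BS i).comp (BS (k + 1)) := by
    apply MvPolynomial.algHom_ext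
    intro j
    simp only [AlgHom.comp_apply]
    rcases lt_trichotomy j i with hj | hj | hj
    · simp only [BS_X_lt hj, BS_X_lt (lt_of_lt_of_le hj h),
        BS_X_lt (lt_of_lt_of_le hj (h.trans (lt_succ_self' k).le))]
    · subst hj
      simp only [BS_X_self, map_zero, BS_X_lt (lt_of_le_of_lt h (lt_succ_self' k)), BS_X_self]
    · obtain ⟨j₀, hij₀, rfl⟩ := exists_succ_of_lt hj
      rcases lt_trichotomy j₀ k with hjk | hjk | hjk
      · simp only [BS_X_succ hij₀, BS_X_lt hjk, BS_X_lt (succ_lt_succ hjk)]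
      · subst hjk
        simp only [BS_X_succ hij₀, BS_X_self, map_zero]
      · obtain ⟨j₁, hkj₁, rfl⟩ := exists_succ_of_lt hjk
        simp only [BS_X_succ hij₀, BS_X_succ hkj₁, BS_X_succ (succ_le_succ hkj₁),
          BS_X_succ (le_trans h hkj₁)]
  calc BS k (BS i f) = ((BS k).comp (BS i)) f := rfl
    _ = ((BS i).comp (BS (k + 1))) f := by rw [key]
    _ = BS i (BS (k + 1) f) := rfl

section TOps

variable (T : ℕ+ → MyR → MyR)
variable (hT : ∀ (i : ℕ+) (f : MyR), (X i : MyR) * T i f = BS (i + 1) f - BS i f)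

/-- The step operator `Ĥ^s_j` at `β = 1`. -/
noncomputable def stp (s : Bool) (j : ℕ+) (f : MyR) : MyR :=
  if s then (1 + X j) * T j f else T j f

variable {T}

include hT

lemma T_add (j : ℕ+) (f g : MyR) : T j (f + g) = T j f + T j g := by
  apply xcancel (i := j)
  rw [hT, map_add, map_add, mul_add, hT, hT]
  ring

lemma T_sub (j : ℕ+) (f g : MyR) : T j (f - g) = T j f - T j g := by
  apply xcancel (i := j)
  rw [hT, map_sub, map_sub, mul_sub, hT, hT]
  ring

lemma T_BS_big {j i₀ : ℕ+} (h : j + 1 ≤ i₀) (f : MyR) :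
    T j (BS (i₀ + 1) f) = BS i₀ (T j f) := by
  have hj : j ≤ i₀ := le_trans (lt_succ_self' j).le h
  apply xcancel (i := j)
  rw [hT, BS_comp_lt h f, BS_comp_lt hj f, ← map_sub, ← hT, map_mul,
    BS_X_lt (lt_of_lt_of_le (lt_succ_self' j) h)]

lemma T_BS_small {j i : ℕ+} (h : i ≤ j) (f : MyR) :
    T j (BS i f) = BS i (T (j + 1) f) := by
  apply xcancel (i := j)
  rw [hT, BS_comp_ge (h.trans (lt_succ_self' j).le) f, BS_comp_ge h f, ← map_sub,
    ← hT, map_mul, BS_X_succ h]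

lemma T_BS_mid (j : ℕ+) (f : MyR) :
    T j (BS (j + 1) f) = BS (j + 1) (T j f) + BS j (T (j + 1) f) := by
  apply xcancel (i := j)
  rw [hT, mul_add]
  have e1 : BS (j+1) (BS (j+1) f) = BS (j+1) (BS (j+1+1) f) := BS_comp_ge le_rfl f
  have e2 : (X j : MyR) * BS (j+1) (T j f) = BS (j+1) (BS (j+1+1) f) - BS j (BS (j+1+1) f) := by
    rw [← T_BS_big hT le_rfl, ← hT]
  have e3 : (X j : MyR) * BS j (T (j+1) f) = BS j (BS (j+1+1) f) - BS j (BS (j+1) f) := by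
    rw [← map_sub, ← hT, map_mul, BS_X_succ (le_refl j)]
  rw [e1, e2, e3]
  ring

lemma T_mulX_lt {j c : ℕ+} (h : c < j) (g : MyR) : T j (X c * g) = X c * T j g := by
  apply xcancel (i := j)
  rw [hT, map_mul, map_mul, BS_X_lt (h.trans (lt_succ_self' j)), BS_X_lt h,
    ← mul_sub, ← hT]
  ring

lemma T_mulX_succ {j c : ℕ+} (h : j + 1 ≤ c) (g : MyR) :
    T j (X (c + 1) * g) = X c * T j g := by
  have hj : j ≤ c := le_trans (lt_succ_self' j).le h
  apply xcancel (i := j)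
  rw [hT, map_mul, map_mul, BS_X_succ h, BS_X_succ hj, ← mul_sub, ← hT]
  ring

lemma T_mulX_self (j : ℕ+) (g : MyR) : T j (X j * g) = BS (j + 1) g := by
  apply xcancel (i := j)
  rw [hT, map_mul, map_mul, BS_X_self, BS_X_lt (lt_succ_self' j), zero_mul, sub_zero]

lemma T_comm {b p₀ : ℕ+} (h : b + 1 ≤ p₀) (f : MyR) :
    T b (T (p₀ + 1) f) = T p₀ (T b f) := by
  have hb : b ≤ p₀ := le_trans (lt_succ_self' b).le h
  apply xcancel (i := b)
  rw [hT, ← T_BS_small hT h, ← T_BS_small hT hb, ← T_sub hT, ← hT,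
    T_mulX_lt hT (lt_of_lt_of_le (lt_succ_self' b) h)]

lemma T_onePlus_lt {j c : ℕ+} (h : c < j) (g : MyR) :
    T j ((1 + X c) * g) = (1 + X c) * T j g := by
  rw [add_mul, one_mul, add_mul, one_mul, T_add hT, T_mulX_lt hT h]

lemma T_onePlus_succ {j c : ℕ+} (h : j + 1 ≤ c) (g : MyR) :
    T j ((1 + X (c + 1)) * g) = (1 + X c) * T j g := by
  rw [add_mul, one_mul, add_mul, one_mul, T_add hT, T_mulX_succ hT h]

/-! step-operator versions -/

lemma stp_add (s : Bool) (j : ℕ+) (f g : MyR) :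
    stp T s j (f + g) = stp T s j f + stp T s j g := by
  cases s <;> simp only [stp, if_true, if_false, Bool.false_eq_true, T_add hT, mul_add]

lemma stp_sub (s : Bool) (j : ℕ+) (f g : MyR) :
    stp T s j (f - g) = stp T s j f - stp T s j g := by
  cases s <;> simp only [stp, if_true, if_false, Bool.false_eq_true, T_sub hT, mul_sub]

lemma stp_expand (j : ℕ+) (f : MyR) :
    stp T true j f = stp T false j f + BS (j + 1) f - BS j f := by
  simp only [stp, if_true, Bool.false_eq_true, if_false]
  rw [add_mul, one_mul, hT]
  ring

lemma stp_BS_big {j i₀ : ℕ+} (s : Bool) (h : j + 1 ≤ i₀) (f : MyR) :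
    stp T s j (BS (i₀ + 1) f) = BS i₀ (stp T s j f) := by
  have hj : j < i₀ := lt_of_lt_of_le (lt_succ_self' j) h
  cases s
  · simp only [stp, Bool.false_eq_true, if_false, T_BS_big hT h]
  · simp only [stp, if_true, T_BS_big hT h, map_mul, map_add, map_one, BS_X_lt hj]

lemma stp_BS_small {j i : ℕ+} (s : Bool) (h : i ≤ j) (f : MyR) :
    stp T s j (BS i f) = BS i (stp T s (j + 1) f) := by
  cases s
  · simp only [stp, Bool.false_eq_true, if_false, T_BS_small hT h]
  · simp only [stp, if_true, T_BS_small hT h, map_mul, map_add, map_one, BS_X_succ h]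

lemma stp_BS_mid (s : Bool) (j : ℕ+) (f : MyR) :
    stp T s j (BS (j + 1) f) = BS (j + 1) (stp T s j f) + BS j (stp T s (j + 1) f) := by
  cases s
  · simp only [stp, Bool.false_eq_true, if_false, T_BS_mid hT]
  · simp only [stp, if_true, T_BS_mid hT, map_mul, map_add, map_one,
      BS_X_lt (lt_succ_self' j), BS_X_succ (le_refl j), mul_add]

lemma stp_comm {b p₀ : ℕ+} (s t : Bool) (h : b + 1 ≤ p₀) (f : MyR) :
    stp T s b (stp T t (p₀ + 1) f) = stp T t p₀ (stp T s b f) := by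
  have hb : b < p₀ := lt_of_lt_of_le (lt_succ_self' b) h
  cases s <;> cases t <;>
    simp only [stp, if_true, if_false, Bool.false_eq_true, T_comm hT h,
      T_onePlus_succ hT h, T_onePlus_lt hT hb, mul_left_comm]

end TOps

/-! ### Tree combinatorics -/

open BTree in
/-- Split leaf `p` (tree offset `a`) into a terminal node. -/
def bsplit : BTree → ℕ+ → ℕ+ → BTree
  | BTree.leaf, a, p => if a = p then BTree.node BTree.leaf BTree.leaf else BTree.leaf
  | BTree.node l r, a, p =>
    if p < a + l.numLeaves then BTree.node (bsplit l a p) r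
    else BTree.node l (bsplit r (a + l.numLeaves) p)

namespace BTreeFacts

open BTree

lemma qdesSet_leaf (a : ℕ+) : qdesSet leaf a = ∅ := rfl

lemma qdesSet_leafleaf (a : ℕ+) : qdesSet (node leaf leaf) a = {a} := rfl

lemma qdesSet_node {l r : BTree} (h : ¬(l = leaf ∧ r = leaf)) (a : ℕ+) :
    qdesSet (node l r) a = l.qdesSet a ∪ r.qdesSet (a + l.numLeaves) := by
  cases l with
  | leaf => cases r with
    | leaf => exact absurd ⟨rfl, rfl⟩ h
    | node r1 r2 => rfl
  | node l1 l2 => cases r <;> rfl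

lemma mem_qdes_left {l r : BTree} {a q : ℕ+} (h : q ∈ l.qdesSet a) :
    q ∈ (node l r).qdesSet a := by
  by_cases hlr : l = leaf ∧ r = leaf
  · rw [hlr.1, qdesSet_leaf] at h
    exact absurd h (Set.notMem_empty q)
  · rw [qdesSet_node hlr]
    exact Set.mem_union_left _ h

lemma mem_qdes_right {l r : BTree} {a q : ℕ+} (h : q ∈ r.qdesSet (a + l.numLeaves)) :
    q ∈ (node l r).qdesSet a := by
  by_cases hlr : l = leaf ∧ r = leaf
  · rw [hlr.2, qdesSet_leaf] at h
    exact absurd h (Set.notMem_empty q)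
  · rw [qdesSet_node hlr]
    exact Set.mem_union_right _ h

lemma numLeaves_pos (t : BTree) : 1 ≤ ((t.numLeaves : ℕ+) : ℕ) := t.numLeaves.one_le

/-- T1: positions of terminal nodes lie strictly inside the leaf range. -/
lemma qdes_range : ∀ (t : BTree) (a q : ℕ+), q ∈ t.qdesSet a →
    (a : ℕ) ≤ (q : ℕ) ∧ (q : ℕ) + 1 < (a : ℕ) + (t.numLeaves : ℕ) := by
  intro t
  induction t with
  | leaf => intro a q h; exact absurd h (Set.notMem_empty q)
  | node l r ihl ihr =>
    intro a q h
    by_cases hlr : l = leaf ∧ r = leaf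
    · obtain ⟨h1, h2⟩ := hlr
      subst h1; subst h2
      rw [qdesSet_leafleaf] at h
      rw [Set.mem_singleton_iff] at h
      subst h
      simp only [numLeaves, PNat.add_coe]
      norm_num
    · rw [qdesSet_node hlr] at h
      rcases h with h | h
      · obtain ⟨h1, h2⟩ := ihl a q h
        refine ⟨h1, ?_⟩
        have : (numLeaves (node l r) : ℕ) = (l.numLeaves : ℕ) + (r.numLeaves : ℕ) := by
          simp [numLeaves, PNat.add_coe]
        omega
      · obtain ⟨h1, h2⟩ := ihr (a + l.numLeaves) q h
        rw [PNat.add_coe] at h1 h2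
        have : (numLeaves (node l r) : ℕ) = (l.numLeaves : ℕ) + (r.numLeaves : ℕ) := by
          simp [numLeaves, PNat.add_coe]
        omega

/-- T2: trimming outside the leaf range does nothing. -/
lemma trim_out : ∀ (t : BTree) (a p : ℕ+),
    ((p : ℕ) < (a : ℕ) ∨ (a : ℕ) + (t.numLeaves : ℕ) ≤ (p : ℕ)) → t.trim a p = t := by
  intro t
  induction t with
  | leaf => intro a p _; rfl
  | node l r ihl ihr =>
    intro a p hout
    have hnl : (numLeaves (node l r) : ℕ) = (l.numLeaves : ℕ) + (r.numLeaves : ℕ) := by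
      simp [numLeaves, PNat.add_coe]
    have hap : a ≠ p := by
      intro hc; subst hc
      rcases hout with h | h
      · omega
      · have := numLeaves_pos l; have := numLeaves_pos r; omega
    show BTree.trim (node l r) a p = node l r
    rw [BTree.trim, if_neg (by tauto)]
    rw [ihl a p (by omega), ihr (a + l.numLeaves) p (by rw [PNat.add_coe]; omega)]

/-- T3: splitting outside the leaf range does nothing. -/
lemma bsplit_out : ∀ (t : BTree) (a p : ℕ+),
    ((p : ℕ) < (a : ℕ) ∨ (a : ℕ) + (t.numLeaves : ℕ) ≤ (p : ℕ)) → bsplit t a p = t := by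
  intro t
  induction t with
  | leaf =>
    intro a p hout
    have : a ≠ p := by
      intro hc; subst hc
      simp only [numLeaves, PNat.one_coe] at hout
      omega
    rw [bsplit, if_neg this]
  | node l r ihl ihr =>
    intro a p hout
    have hnl : (numLeaves (node l r) : ℕ) = (l.numLeaves : ℕ) + (r.numLeaves : ℕ) := by
      simp [numLeaves, PNat.add_coe]
    rw [bsplit]
    by_cases hc : p < a + l.numLeaves
    · rw [if_pos hc, ihl a p ?_]
      rw [← PNat.coe_lt_coe, PNat.add_coe] at hc
      omega
    · rw [if_neg hc, ihr (a + l.numLeaves) p ?_]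
      rw [← PNat.coe_lt_coe, PNat.add_coe] at hc
      rw [PNat.add_coe]
      omega

lemma bsplit_ne_leaf : ∀ (t : BTree) (a p : ℕ+), (a : ℕ) ≤ p →
    (p : ℕ) < (a : ℕ) + (t.numLeaves : ℕ) → bsplit t a p ≠ leaf := by
  intro t a p ha hp
  cases t with
  | leaf =>
    have : a = p := by
      simp only [numLeaves, PNat.one_coe] at hp
      rw [← PNat.coe_inj]; omega
    rw [bsplit, if_pos this]
    exact fun h => BTree.noConfusion h
  | node l r =>
    rw [bsplit]
    split_ifs <;> exact fun h => BTree.noConfusion h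

/-- T4a/T4b: number of leaves and size of a split tree. -/
lemma numLeaves_bsplit : ∀ (t : BTree) (a p : ℕ+), (a : ℕ) ≤ p →
    (p : ℕ) < (a : ℕ) + (t.numLeaves : ℕ) →
    ((bsplit t a p).numLeaves : ℕ) = (t.numLeaves : ℕ) + 1 := by
  intro t
  induction t with
  | leaf =>
    intro a p ha hp
    have : a = p := by
      simp only [numLeaves, PNat.one_coe] at hp
      rw [← PNat.coe_inj]; omega
    rw [bsplit, if_pos this]
    simp [numLeaves, PNat.add_coe]
  | node l r ihl ihr =>
    intro a p ha hp
    have hnl : (numLeaves (node l r) : ℕ) = (l.numLeaves : ℕ) + (r.numLeaves : ℕ) := by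
      simp [numLeaves, PNat.add_coe]
    rw [bsplit]
    by_cases hc : p < a + l.numLeaves
    · rw [← PNat.coe_lt_coe, PNat.add_coe] at hc
      rw [if_pos (by rw [← PNat.coe_lt_coe, PNat.add_coe]; omega)]
      have := ihl a p ha hc
      simp only [numLeaves, PNat.add_coe] at *
      omega
    · rw [← PNat.coe_lt_coe, PNat.add_coe] at hc
      rw [if_neg (by rw [← PNat.coe_lt_coe, PNat.add_coe]; omega)]
      have := ihr (a + l.numLeaves) p (by rw [PNat.add_coe]; omega)
        (by rw [PNat.add_coe]; omega)
      simp only [numLeaves, PNat.add_coe] at *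
      omega

lemma size_bsplit : ∀ (t : BTree) (a p : ℕ+), (a : ℕ) ≤ p →
    (p : ℕ) < (a : ℕ) + (t.numLeaves : ℕ) →
    (bsplit t a p).size = t.size + 1 := by
  intro t
  induction t with
  | leaf =>
    intro a p ha hp
    have : a = p := by
      simp only [numLeaves, PNat.one_coe] at hp
      rw [← PNat.coe_inj]; omega
    rw [bsplit, if_pos this]
    rfl
  | node l r ihl ihr =>
    intro a p ha hp
    have hnl : (numLeaves (node l r) : ℕ) = (l.numLeaves : ℕ) + (r.numLeaves : ℕ) := by
      simp [numLeaves, PNat.add_coe]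
    rw [bsplit]
    by_cases hc : (p : ℕ) < (a : ℕ) + (l.numLeaves : ℕ)
    · rw [if_pos (by rw [← PNat.coe_lt_coe, PNat.add_coe]; omega)]
      have := ihl a p ha hc
      simp only [size] at *
      omega
    · rw [if_neg (by rw [← PNat.coe_lt_coe, PNat.add_coe]; omega)]
      have := ihr (a + l.numLeaves) p (by rw [PNat.add_coe]; omega)
        (by rw [PNat.add_coe]; omega)
      simp only [size] at *
      omega

/-- T4c: trimming a split tree recovers the original tree. -/
lemma trim_bsplit : ∀ (t : BTree) (a p : ℕ+), (a : ℕ) ≤ p →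
    (p : ℕ) < (a : ℕ) + (t.numLeaves : ℕ) →
    (bsplit t a p).trim a p = t := by
  intro t
  induction t with
  | leaf =>
    intro a p ha hp
    have : a = p := by
      simp only [numLeaves, PNat.one_coe] at hp
      rw [← PNat.coe_inj]; omega
    rw [bsplit, if_pos this, BTree.trim, if_pos ⟨rfl, rfl, this⟩]
  | node l r ihl ihr =>
    intro a p ha hp
    have hnl : (numLeaves (node l r) : ℕ) = (l.numLeaves : ℕ) + (r.numLeaves : ℕ) := by
      simp [numLeaves, PNat.add_coe]
    rw [bsplit]
    by_cases hc : (p : ℕ) < (a : ℕ) + (l.numLeaves : ℕ)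
    · rw [if_pos (by rw [← PNat.coe_lt_coe, PNat.add_coe]; omega)]
      rw [BTree.trim, if_neg (fun hx => bsplit_ne_leaf l a p ha hc hx.1)]
      rw [ihl a p ha hc]
      congr 1
      apply trim_out
      left
      rw [PNat.add_coe, numLeaves_bsplit l a p ha hc]
      omega
    · rw [if_neg (by rw [← PNat.coe_lt_coe, PNat.add_coe]; omega)]
      have hb : (bsplit r (a + l.numLeaves) p) ≠ leaf :=
        bsplit_ne_leaf r (a + l.numLeaves) p (by rw [PNat.add_coe]; omega)
          (by rw [PNat.add_coe]; omega)
      rw [BTree.trim, if_neg (fun hx => hb hx.2.1)]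
      rw [ihr (a + l.numLeaves) p (by rw [PNat.add_coe]; omega) (by rw [PNat.add_coe]; omega)]
      congr 1
      apply trim_out
      right
      omega

/-- T4d: the split position is a terminal node of the split tree. -/
lemma mem_qdes_bsplit : ∀ (t : BTree) (a p : ℕ+), (a : ℕ) ≤ p →
    (p : ℕ) < (a : ℕ) + (t.numLeaves : ℕ) →
    p ∈ (bsplit t a p).qdesSet a := by
  intro t
  induction t with
  | leaf =>
    intro a p ha hp
    have : a = p := by
      simp only [numLeaves, PNat.one_coe] at hp
      rw [← PNat.coe_inj]; omega
    rw [bsplit, if_pos this, qdesSet_leafleaf]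
    exact this ▸ rfl
  | node l r ihl ihr =>
    intro a p ha hp
    have hnl : (numLeaves (node l r) : ℕ) = (l.numLeaves : ℕ) + (r.numLeaves : ℕ) := by
      simp [numLeaves, PNat.add_coe]
    rw [bsplit]
    by_cases hc : (p : ℕ) < (a : ℕ) + (l.numLeaves : ℕ)
    · rw [if_pos (by rw [← PNat.coe_lt_coe, PNat.add_coe]; omega)]
      exact mem_qdes_left (ihl a p ha hc)
    · rw [if_neg (by rw [← PNat.coe_lt_coe, PNat.add_coe]; omega)]
      exact mem_qdes_right (ihr (a + l.numLeaves) p (by rw [PNat.add_coe]; omega)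
        (by rw [PNat.add_coe]; omega))

/-- T4e: terminal nodes of a split tree. -/
lemma qdes_bsplit_sub : ∀ (t : BTree) (a p q : ℕ+), (a : ℕ) ≤ p →
    (p : ℕ) < (a : ℕ) + (t.numLeaves : ℕ) →
    q ∈ (bsplit t a p).qdesSet a →
    q = p ∨ p < q ∨ ((q : ℕ) + 1 < (p : ℕ) ∧ q ∈ t.qdesSet a) := by
  intro t
  induction t with
  | leaf =>
    intro a p q ha hp hq
    have : a = p := by
      simp only [numLeaves, PNat.one_coe] at hp
      rw [← PNat.coe_inj]; omega
    rw [bsplit, if_pos this, qdesSet_leafleaf, Set.mem_singleton_iff] at hq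
    exact Or.inl (hq.trans this)
  | node l r ihl ihr =>
    intro a p q ha hp hq
    have hnl : (numLeaves (node l r) : ℕ) = (l.numLeaves : ℕ) + (r.numLeaves : ℕ) := by
      simp [numLeaves, PNat.add_coe]
    rw [bsplit] at hq
    by_cases hc : (p : ℕ) < (a : ℕ) + (l.numLeaves : ℕ)
    · rw [if_pos (by rw [← PNat.coe_lt_coe, PNat.add_coe]; omega)] at hq
      rw [qdesSet_node (fun hx => bsplit_ne_leaf l a p ha hc hx.1)] at hq
      rcases hq with hq | hq
      · rcases ihl a p q ha hc hq with h | h | h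
        · exact Or.inl h
        · exact Or.inr (Or.inl h)
        · exact Or.inr (Or.inr ⟨h.1, mem_qdes_left h.2⟩)
      · -- q in right subtree of split: its offset exceeds p
        have := (qdes_range r _ q hq).1
        rw [PNat.add_coe, numLeaves_bsplit l a p ha hc] at this
        refine Or.inr (Or.inl ?_)
        rw [← PNat.coe_lt_coe]
        omega
    · rw [if_neg (by rw [← PNat.coe_lt_coe, PNat.add_coe]; omega)] at hq
      have hb : (bsplit r (a + l.numLeaves) p) ≠ leaf :=
        bsplit_ne_leaf r (a + l.numLeaves) p (by rw [PNat.add_coe]; omega)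
          (by rw [PNat.add_coe]; omega)
      rw [qdesSet_node (fun hx => hb hx.2)] at hq
      rcases hq with hq | hq
      · have := (qdes_range l a q hq).2
        exact Or.inr (Or.inr ⟨by omega, mem_qdes_left hq⟩)
      · rcases ihr (a + l.numLeaves) p q (by rw [PNat.add_coe]; omega)
          (by rw [PNat.add_coe]; omega) hq with h | h | h
        · exact Or.inl h
        · exact Or.inr (Or.inl h)
        · exact Or.inr (Or.inr ⟨h.1, mem_qdes_right h.2⟩)

/-- T6: trimming at a terminal node decreases size by one. -/
lemma size_trim : ∀ (t : BTree) (a q : ℕ+), q ∈ t.qdesSet a →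
    (t.trim a q).size + 1 = t.size := by
  intro t
  induction t with
  | leaf => intro a q h; exact absurd h (Set.notMem_empty q)
  | node l r ihl ihr =>
    intro a q h
    by_cases hlr : l = leaf ∧ r = leaf
    · obtain ⟨h1, h2⟩ := hlr
      subst h1; subst h2
      rw [qdesSet_leafleaf, Set.mem_singleton_iff] at h
      subst h
      rw [BTree.trim, if_pos ⟨rfl, rfl, rfl⟩]
      rfl
    · rw [qdesSet_node hlr] at h
      rw [BTree.trim, if_neg (by tauto)]
      rcases h with h | h
      · obtain ⟨hr1, hr2⟩ := qdes_range l a q h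
        rw [trim_out r (a + l.numLeaves) q (by left; rw [PNat.add_coe]; omega)]
        have := ihl a q h
        simp only [size] at *
        omega
      · obtain ⟨hr1, hr2⟩ := qdes_range r (a + l.numLeaves) q h
        rw [PNat.add_coe] at hr1 hr2
        rw [trim_out l a q (by right; omega)]
        have := ihr (a + l.numLeaves) q h
        simp only [size] at *
        omega

/-- T8: a non-leaf tree has a terminal node. -/
lemma qdes_nonempty : ∀ (t : BTree) (a : ℕ+), t ≠ leaf → ∃ q, q ∈ t.qdesSet a := by
  intro t
  induction t with
  | leaf => intro a h; exact absurd rfl h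
  | node l r ihl ihr =>
    intro a _
    by_cases hlr : l = leaf ∧ r = leaf
    · obtain ⟨h1, h2⟩ := hlr
      subst h1; subst h2
      exact ⟨a, rfl⟩
    · by_cases hl : l = leaf
      · have hr : r ≠ leaf := fun hc => hlr ⟨hl, hc⟩
        obtain ⟨q, hq⟩ := ihr (a + l.numLeaves) hr
        exact ⟨q, mem_qdes_right hq⟩
      · obtain ⟨q, hq⟩ := ihl a hl
        exact ⟨q, mem_qdes_left hq⟩

end BTreeFacts

/-! ### Forest combinatorics -/

namespace ForestFacts

open BTree BTreeFacts IndexedForest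

lemma forest_ext {F G : IndexedForest} (h : F.trees = G.trees) : F = G := by
  cases F; cases G; simpa using h

lemma empty_trees (n : ℕ) : (IndexedForest.empty.trees n) = BTree.leaf := rfl

lemma eq_empty_iff {F : IndexedForest} : F = IndexedForest.empty ↔ ∀ n, F.trees n = BTree.leaf := by
  constructor
  · intro h n; rw [h]; rfl
  · intro h; exact forest_ext (funext h)

lemma fl_coe (F : IndexedForest) (n : ℕ) :
    (F.firstLeaf n : ℕ) = 1 + ∑ m ∈ Finset.range n, ((F.trees m).numLeaves : ℕ) := rfl

lemma fl_succ (F : IndexedForest) (n : ℕ) :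
    (F.firstLeaf (n + 1) : ℕ) = (F.firstLeaf n : ℕ) + ((F.trees n).numLeaves : ℕ) := by
  rw [fl_coe, fl_coe, Finset.sum_range_succ]
  omega

lemma fl_mono (F : IndexedForest) {n m : ℕ} (h : n ≤ m) :
    (F.firstLeaf n : ℕ) ≤ (F.firstLeaf m : ℕ) := by
  rw [fl_coe, fl_coe]
  exact Nat.add_le_add_left (Finset.sum_le_sum_of_subset (Finset.range_subset_range.mpr h)) 1

lemma fl_one (F : IndexedForest) (n : ℕ) : 1 ≤ (F.firstLeaf n : ℕ) := (F.firstLeaf n).one_le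

lemma fl_strict (F : IndexedForest) {n m : ℕ} (h : n < m) :
    (F.firstLeaf n : ℕ) < (F.firstLeaf m : ℕ) := by
  have h1 := fl_succ F n
  have h2 := fl_mono F (show n + 1 ≤ m by omega)
  have := numLeaves_pos (F.trees n)
  omega

lemma fl_lower (F : IndexedForest) (n : ℕ) : 1 + n ≤ (F.firstLeaf n : ℕ) := by
  induction n with
  | zero => simp [fl_coe]
  | succ k ih =>
    have := fl_succ F k
    have := numLeaves_pos (F.trees k)
    omega

/-- Every position `p` lies in the leaf range of exactly one tree. -/
lemma exists_tree (F : IndexedForest) (p : ℕ+) :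
    ∃ n, (F.firstLeaf n : ℕ) ≤ (p : ℕ) ∧
      (p : ℕ) < (F.firstLeaf n : ℕ) + ((F.trees n).numLeaves : ℕ) := by
  have hne : ∃ n, (p : ℕ) < (F.firstLeaf (n + 1) : ℕ) := by
    refine ⟨(p : ℕ), ?_⟩
    have := fl_lower F ((p : ℕ) + 1)
    omega
  classical
  refine ⟨Nat.find hne, ?_, ?_⟩
  · rcases Nat.eq_zero_or_pos (Nat.find hne) with h0 | h0
    · have hfl1 : (F.firstLeaf (Nat.find hne) : ℕ) = 1 := by
        rw [h0, fl_coe]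
        simp
      rw [hfl1]
      exact p.one_le
    · have hmin := Nat.find_min hne (m := Nat.find hne - 1) (by omega)
      have heq : Nat.find hne - 1 + 1 = Nat.find hne := by omega
      rw [heq] at hmin
      omega
  · have := Nat.find_spec hne
    have := fl_succ F (Nat.find hne)
    omega

lemma mem_supp {F : IndexedForest} {n : ℕ} (h : F.trees n ≠ BTree.leaf) : n ∈ F.supp := by
  simp only [IndexedForest.supp, Set.Finite.mem_toFinset, Set.mem_setOf_eq]
  exact h

lemma size_eq_sum (F : IndexedForest) {s : Finset ℕ} (hs : F.supp ⊆ s) :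
    F.size = ∑ n ∈ s, (F.trees n).size := by
  refine Finset.sum_subset hs (fun x _ hx => ?_)
  have : F.trees x = BTree.leaf := by
    by_contra hc
    exact hx (mem_supp hc)
  rw [this]
  rfl

lemma size_tree_pos {t : BTree} (h : t ≠ BTree.leaf) : 1 ≤ t.size := by
  cases t with
  | leaf => exact absurd rfl h
  | node l r => show 1 ≤ l.size + r.size + 1; omega

lemma size_pos {F : IndexedForest} (h : F ≠ IndexedForest.empty) : 1 ≤ F.size := by
  have : ∃ n, F.trees n ≠ BTree.leaf := by
    by_contra hc
    push_neg at hc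
    exact h (eq_empty_iff.mpr hc)
  obtain ⟨n, hn⟩ := this
  calc 1 ≤ (F.trees n).size := size_tree_pos hn
    _ ≤ F.size := by
      rw [size_eq_sum F (le_refl F.supp)]
      exact Finset.single_le_sum (f := fun n => (F.trees n).size)
        (fun m _ => Nat.zero_le _) (mem_supp hn)

lemma mem_qdes_iff {F : IndexedForest} {q : ℕ+} :
    q ∈ F.qdes ↔ ∃ n, q ∈ (F.trees n).qdesSet (F.firstLeaf n) := by
  simp [IndexedForest.qdes, Set.mem_iUnion]

lemma ne_empty_of_mem_qdes {F : IndexedForest} {q : ℕ+} (h : q ∈ F.qdes) :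
    F ≠ IndexedForest.empty := by
  intro hc
  subst hc
  obtain ⟨n, hn⟩ := mem_qdes_iff.mp h
  exact absurd hn (Set.notMem_empty q)

lemma qdes_nonempty {F : IndexedForest} (h : F ≠ IndexedForest.empty) : F.qdes.Nonempty := by
  have : ∃ n, F.trees n ≠ BTree.leaf := by
    by_contra hc
    push_neg at hc
    exact h (eq_empty_iff.mpr hc)
  obtain ⟨n, hn⟩ := this
  obtain ⟨q, hq⟩ := BTreeFacts.qdes_nonempty (F.trees n) (F.firstLeaf n) hn
  exact ⟨q, mem_qdes_iff.mpr ⟨n, hq⟩⟩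

lemma minQDes_spec {F : IndexedForest} (h : F ≠ IndexedForest.empty) :
    F.minQDes ∈ F.qdes ∧ ∀ q ∈ F.qdes, F.minQDes ≤ q := by
  obtain ⟨q0, hq0⟩ := qdes_nonempty h
  have hne : ((fun i : ℕ+ => (i : ℕ)) '' F.qdes).Nonempty := ⟨(q0 : ℕ), ⟨q0, hq0, rfl⟩⟩
  have hval : (F.minQDes : ℕ) = sInf ((fun i : ℕ+ => (i : ℕ)) '' F.qdes) := by
    rw [IndexedForest.minQDes]
    exact congrArg Subtype.val (dif_pos hne)
  obtain ⟨i, hi, hieq⟩ := Nat.sInf_mem hne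
  have hmi : F.minQDes = i := PNat.coe_injective (by rw [hval, ← hieq])
  refine ⟨hmi ▸ hi, fun q hq => ?_⟩
  rw [← PNat.coe_le_coe, hval]
  exact Nat.sInf_le ⟨q, hq, rfl⟩

lemma minQDes_eq {F : IndexedForest} {p : ℕ+} (hp : p ∈ F.qdes)
    (hmin : ∀ q ∈ F.qdes, p ≤ q) : F.minQDes = p := by
  obtain ⟨h1, h2⟩ := minQDes_spec (ne_empty_of_mem_qdes hp)
  exact le_antisymm (h2 p hp) (hmin _ h1)

/-- Trimming at a terminal node decreases the size by one. -/
lemma size_trimF {F : IndexedForest} {j : ℕ+} (hj : j ∈ F.qdes) :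
    (F.trim j).size + 1 = F.size := by
  obtain ⟨n₁, hn₁⟩ := mem_qdes_iff.mp hj
  obtain ⟨hr1, hr2⟩ := qdes_range (F.trees n₁) (F.firstLeaf n₁) j hn₁
  have htrim : ∀ n, n ≠ n₁ → (F.trim j).trees n = F.trees n := by
    intro n hn
    show (F.trees n).trim (F.firstLeaf n) j = F.trees n
    apply trim_out
    rcases Nat.lt_or_ge n n₁ with h | h
    · right
      have : (F.firstLeaf n : ℕ) + ((F.trees n).numLeaves : ℕ) = (F.firstLeaf (n+1) : ℕ) :=
        (fl_succ F n).symm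
      have := fl_mono F (show n + 1 ≤ n₁ by omega)
      omega
    · left
      have hn1 : n₁ + 1 ≤ n := by omega
      have : (F.firstLeaf (n₁ + 1) : ℕ) ≤ (F.firstLeaf n : ℕ) := fl_mono F hn1
      have := fl_succ F n₁
      omega
  have hsupp : (F.trim j).supp ⊆ F.supp := by
    intro n hn
    simp only [IndexedForest.supp, Set.Finite.mem_toFinset, Set.mem_setOf_eq] at hn ⊢
    intro hc
    apply hn
    show (F.trees n).trim (F.firstLeaf n) j = BTree.leaf
    rw [hc]
    rfl
  have hs : F.supp ⊆ F.supp ∪ {n₁} := Finset.subset_union_left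
  rw [size_eq_sum F hs, size_eq_sum (F.trim j) (hsupp.trans hs)]
  have key : ∀ n ∈ F.supp ∪ {n₁},
      ((F.trim j).trees n).size + (if n = n₁ then 1 else 0) = (F.trees n).size := by
    intro n _
    by_cases hn : n = n₁
    · subst hn
      rw [if_pos rfl]
      exact size_trim (F.trees n) (F.firstLeaf n) j hn₁
    · rw [if_neg hn, htrim n hn]
      omega
  calc (∑ n ∈ F.supp ∪ {n₁}, ((F.trim j).trees n).size) + 1
      = ∑ n ∈ F.supp ∪ {n₁}, (((F.trim j).trees n).size + if n = n₁ then 1 else 0) := by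
        rw [Finset.sum_add_distrib, Finset.sum_ite_eq' (F.supp ∪ {n₁}) n₁ (fun _ => 1)]
        rw [if_pos (Finset.mem_union_right _ (Finset.mem_singleton_self n₁))]
    _ = ∑ n ∈ F.supp ∪ {n₁}, (F.trees n).size := Finset.sum_congr rfl key

/-- The split forest. -/
noncomputable def splitF (G : IndexedForest) (p : ℕ+) : IndexedForest where
  trees n := bsplit (G.trees n) (G.firstLeaf n) p
  finite := by
    have h1 : {n | G.firstLeaf n = p}.Subsingleton := by
      intro x hx y hy
      simp only [Set.mem_setOf_eq] at hx hy
      by_contra hne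
      rcases Nat.lt_or_ge x y with h | h
      · have := fl_strict G h
        rw [hx, hy] at this
        omega
      · have hxy : y < x := by omega
        have := fl_strict G hxy
        rw [hx, hy] at this
        omega
    apply (G.finite.union h1.finite).subset
    intro n hn
    simp only [Set.mem_setOf_eq, Set.mem_union] at hn ⊢
    by_cases h : G.trees n = BTree.leaf
    · right
      rw [h] at hn
      by_contra hc
      apply hn
      rw [bsplit, if_neg hc]
    · left; exact h

section SplitFacts

variable {G : IndexedForest} {p : ℕ+} {n₀ : ℕ}
variable (h1 : (G.firstLeaf n₀ : ℕ) ≤ (p : ℕ))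
variable (h2 : (p : ℕ) < (G.firstLeaf n₀ : ℕ) + ((G.trees n₀).numLeaves : ℕ))

include h1 h2

lemma splitF_trees_out {n : ℕ} (hn : n ≠ n₀) : (splitF G p).trees n = G.trees n := by
  show bsplit (G.trees n) (G.firstLeaf n) p = G.trees n
  apply bsplit_out
  rcases Nat.lt_or_ge n n₀ with h | h
  · right
    have : (G.firstLeaf n : ℕ) + ((G.trees n).numLeaves : ℕ) = (G.firstLeaf (n+1) : ℕ) :=
      (fl_succ G n).symm
    have := fl_mono G (show n + 1 ≤ n₀ by omega)
    omega
  · left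
    have hn1 : n₀ + 1 ≤ n := by omega
    have := fl_mono G hn1
    have := fl_succ G n₀
    omega

lemma splitF_fl {n : ℕ} :
    ((splitF G p).firstLeaf n : ℕ) = (G.firstLeaf n : ℕ) + (if n₀ < n then 1 else 0) := by
  rw [fl_coe, fl_coe]
  have key : ∀ m, ((bsplit (G.trees m) (G.firstLeaf m) p).numLeaves : ℕ) =
      ((G.trees m).numLeaves : ℕ) + (if m = n₀ then 1 else 0) := by
    intro m
    by_cases hm : m = n₀
    · subst hm
      rw [if_pos rfl]
      exact numLeaves_bsplit _ _ _ h1 h2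
    · rw [if_neg hm]
      have heq : bsplit (G.trees m) (G.firstLeaf m) p = G.trees m := splitF_trees_out h1 h2 hm
      rw [heq]
      omega
  have : ∑ m ∈ Finset.range n, ((bsplit (G.trees m) (G.firstLeaf m) p).numLeaves : ℕ) =
      ∑ m ∈ Finset.range n, (((G.trees m).numLeaves : ℕ) + if m = n₀ then 1 else 0) :=
    Finset.sum_congr rfl (fun m _ => key m)
  rw [show ∑ m ∈ Finset.range n, (((splitF G p).trees m).numLeaves : ℕ) =
      ∑ m ∈ Finset.range n, ((bsplit (G.trees m) (G.firstLeaf m) p).numLeaves : ℕ) from rfl,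
    this, Finset.sum_add_distrib, Finset.sum_ite_eq' (Finset.range n) n₀ (fun _ => 1)]
  simp only [Finset.mem_range]
  omega

lemma splitF_fl_at : (splitF G p).firstLeaf n₀ = G.firstLeaf n₀ := by
  apply PNat.coe_injective
  rw [splitF_fl h1 h2, if_neg (lt_irrefl n₀)]
  omega

/-- F2: trimming the split forest recovers the original forest. -/
lemma trimF_splitF : (splitF G p).trim p = G := by
  apply forest_ext
  funext n
  show ((splitF G p).trees n).trim ((splitF G p).firstLeaf n) p = G.trees n
  by_cases hn : n = n₀
  · subst hn
    rw [splitF_fl_at h1 h2]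
    exact trim_bsplit _ _ _ h1 h2
  · rw [splitF_trees_out h1 h2 hn]
    apply trim_out
    rcases Nat.lt_or_ge n n₀ with h | h
    · right
      have hfl : ((splitF G p).firstLeaf n : ℕ) = (G.firstLeaf n : ℕ) := by
        rw [splitF_fl h1 h2, if_neg (by omega)]
        omega
      have : (G.firstLeaf n : ℕ) + ((G.trees n).numLeaves : ℕ) = (G.firstLeaf (n+1) : ℕ) :=
        (fl_succ G n).symm
      have := fl_mono G (show n + 1 ≤ n₀ by omega)
      omega
    · left
      have hfl : ((splitF G p).firstLeaf n : ℕ) = (G.firstLeaf n : ℕ) + 1 := by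
        rw [splitF_fl h1 h2, if_pos (by omega)]
      have := fl_mono G (show n₀ + 1 ≤ n by omega)
      have := fl_succ G n₀
      omega

/-- F4: `p` is a terminal node of the split forest. -/
lemma mem_qdes_splitF : p ∈ (splitF G p).qdes := by
  apply mem_qdes_iff.mpr
  refine ⟨n₀, ?_⟩
  rw [splitF_fl_at h1 h2]
  exact mem_qdes_bsplit (G.trees n₀) _ _ h1 h2

/-- F3: minimality of `p` in the split forest. -/
lemma qdes_splitF_ge (hyp : ∀ q ∈ G.qdes, (p : ℕ) ≤ (q : ℕ) + 1) :
    ∀ q ∈ (splitF G p).qdes, p ≤ q := by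
  intro q hq
  obtain ⟨n, hn⟩ := mem_qdes_iff.mp hq
  rw [← PNat.coe_le_coe]
  by_cases h : n = n₀
  · subst h
    rw [splitF_fl_at h1 h2] at hn
    rcases qdes_bsplit_sub (G.trees n) _ _ _ h1 h2 hn with he | hlt | ⟨hlt, hmem⟩
    · rw [he]
    · rw [← PNat.coe_lt_coe] at hlt
      omega
    · have := hyp q (mem_qdes_iff.mpr ⟨n, hmem⟩)
      omega
  · have htr := splitF_trees_out h1 h2 h
    rw [htr] at hn
    obtain ⟨hq1, hq2⟩ := qdes_range (G.trees n) _ q hn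
    rcases Nat.lt_or_ge n n₀ with hlt | hge
    · -- impossible: q is in an earlier tree but also in G.qdes with q+1 < p contradiction
      have hfl : ((splitF G p).firstLeaf n : ℕ) = (G.firstLeaf n : ℕ) := by
        rw [splitF_fl h1 h2, if_neg (by omega)]
        omega
      have hmem : q ∈ G.qdes := by
        apply mem_qdes_iff.mpr
        refine ⟨n, ?_⟩
        have : (splitF G p).firstLeaf n = G.firstLeaf n := PNat.coe_injective hfl
        rwa [this] at hn
      have := hyp q hmem
      have : (G.firstLeaf n : ℕ) + ((G.trees n).numLeaves : ℕ) = (G.firstLeaf (n+1) : ℕ) :=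
        (fl_succ G n).symm
      have := fl_mono G (show n + 1 ≤ n₀ by omega)
      rw [hfl] at hq1 hq2
      omega
    · have hfl : ((splitF G p).firstLeaf n : ℕ) = (G.firstLeaf n : ℕ) + 1 := by
        rw [splitF_fl h1 h2, if_pos (by omega)]
      have := fl_mono G (show n₀ + 1 ≤ n by omega)
      have := fl_succ G n₀
      omega

/-- F5: size of the split forest. -/
lemma size_splitF : (splitF G p).size = G.size + 1 := by
  have hn₀supp : n₀ ∈ (splitF G p).supp := by
    apply mem_supp
    show bsplit (G.trees n₀) (G.firstLeaf n₀) p ≠ BTree.leaf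
    exact bsplit_ne_leaf _ _ _ h1 h2
  have hsupp : (splitF G p).supp ⊆ G.supp ∪ {n₀} := by
    intro n hn
    by_cases h : n = n₀
    · exact Finset.mem_union_right _ (h ▸ Finset.mem_singleton_self n₀)
    · apply Finset.mem_union_left
      simp only [IndexedForest.supp, Set.Finite.mem_toFinset, Set.mem_setOf_eq] at hn ⊢
      rw [splitF_trees_out h1 h2 h] at hn
      exact hn
  have hs : G.supp ⊆ G.supp ∪ {n₀} := Finset.subset_union_left
  rw [size_eq_sum G hs, size_eq_sum (splitF G p) hsupp]
  have key : ∀ n ∈ G.supp ∪ {n₀},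
      ((splitF G p).trees n).size = (G.trees n).size + (if n = n₀ then 1 else 0) := by
    intro n _
    by_cases hn : n = n₀
    · subst hn
      rw [if_pos rfl]
      exact size_bsplit _ _ _ h1 h2
    · rw [if_neg hn, splitF_trees_out h1 h2 hn]
      omega
  rw [Finset.sum_congr rfl key, Finset.sum_add_distrib,
    Finset.sum_ite_eq' (G.supp ∪ {n₀}) n₀ (fun _ => 1),
    if_pos (Finset.mem_union_right _ (Finset.mem_singleton_self n₀))]

end SplitFacts

end ForestFacts

/-! ### Extract lemmas -/

section ExtractFacts

open ForestFacts

variable {T : ℕ+ → MyR → MyR}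
variable (hT : ∀ (i : ℕ+) (f : MyR), (X i : MyR) * T i f = BS (i + 1) f - BS i f)

lemma extractAux_empty (β : ℤ) (k : ℕ) (f : MyR) :
    extractAux T β k IndexedForest.empty f = f := by
  cases k with
  | zero => rfl
  | succ k => rw [extractAux, if_pos rfl]

lemma extract_empty (β : ℤ) (f : MyR) : extract T β IndexedForest.empty f = f :=
  extractAux_empty β _ f

open Classical in
lemma extract_step {F : IndexedForest} (h : F ≠ IndexedForest.empty) (f : MyR) :
    extract T 1 F f = extract T 1 (F.trim F.minQDes)
      (if F.rightAt F.minQDes then stp T true F.minQDes f else stp T false F.minQDes f) := by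
  have h1 := size_pos h
  have h2 := size_trimF (minQDes_spec h).1
  show extractAux T 1 F.size F f = extractAux T 1 (F.trim F.minQDes).size _ _
  obtain ⟨k, hk⟩ : ∃ k, F.size = k + 1 := ⟨F.size - 1, by omega⟩
  have hk2 : (F.trim F.minQDes).size = k := by omega
  rw [hk, hk2, extractAux, if_neg h]
  congr 1
  by_cases hr : F.rightAt F.minQDes
  · rw [if_pos hr, if_pos hr]
    simp [stp, map_one]
  · rw [if_neg hr, if_neg hr]
    simp [stp]

include hT

lemma extractAux_add (k : ℕ) :
    ∀ (F : IndexedForest) (f g : MyR),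
      extractAux T 1 k F (f + g) = extractAux T 1 k F f + extractAux T 1 k F g := by
  induction k with
  | zero => intro F f g; rfl
  | succ k ih =>
    intro F f g
    rw [extractAux, extractAux, extractAux]
    by_cases h : F = IndexedForest.empty
    · rw [if_pos h, if_pos h, if_pos h]
    · rw [if_neg h, if_neg h, if_neg h, ← ih]
      congr 1
      by_cases hr : F.rightAt F.minQDes
      · rw [if_pos hr, if_pos hr, if_pos hr, T_add hT, mul_add]
      · rw [if_neg hr, if_neg hr, if_neg hr, T_add hT]

lemma extractAux_sub (k : ℕ) :
    ∀ (F : IndexedForest) (f g : MyR),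
      extractAux T 1 k F (f - g) = extractAux T 1 k F f - extractAux T 1 k F g := by
  induction k with
  | zero => intro F f g; rfl
  | succ k ih =>
    intro F f g
    rw [extractAux, extractAux, extractAux]
    by_cases h : F = IndexedForest.empty
    · rw [if_pos h, if_pos h, if_pos h]
    · rw [if_neg h, if_neg h, if_neg h, ← ih]
      congr 1
      by_cases hr : F.rightAt F.minQDes
      · rw [if_pos hr, if_pos hr, if_pos hr, T_sub hT, mul_sub]
      · rw [if_neg hr, if_neg hr, if_neg hr, T_sub hT]

lemma extract_add (F : IndexedForest) (f g : MyR) :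
    extract T 1 F (f + g) = extract T 1 F f + extract T 1 F g :=
  extractAux_add hT F.size F f g

lemma extract_sub (F : IndexedForest) (f g : MyR) :
    extract T 1 F (f - g) = extract T 1 F f - extract T 1 F g :=
  extractAux_sub hT F.size F f g

end ExtractFacts

/-! ### Representations by lists of triples -/

section Reps

open ForestFacts

variable (T : ℕ+ → MyR → MyR)

/-- Evaluation of a triple `(c, w, G)` on `f` : `c • BS_w (Ĥ_G f)`. -/
noncomputable def ev (x : ℤ × List ℕ+ × IndexedForest) (f : MyR) : MyR :=
  x.1 • x.2.1.foldr (fun j g => BS j g) (extract T 1 x.2.2 f)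

noncomputable def sumL (L : List (ℤ × List ℕ+ × IndexedForest)) (f : MyR) : MyR :=
  (L.map (fun x => ev T x f)).sum

lemma sumL_nil (f : MyR) : sumL T [] f = 0 := rfl

lemma sumL_cons (x : ℤ × List ℕ+ × IndexedForest) (L : List (ℤ × List ℕ+ × IndexedForest))
    (f : MyR) : sumL T (x :: L) f = ev T x f + sumL T L f := by
  simp [sumL]

lemma sumL_append (L1 L2 : List (ℤ × List ℕ+ × IndexedForest)) (f : MyR) :
    sumL T (L1 ++ L2) f = sumL T L1 f + sumL T L2 f := by
  simp [sumL]

lemma sumL_neg (L : List (ℤ × List ℕ+ × IndexedForest)) (f : MyR) :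
    sumL T (L.map (fun x => (-x.1, x.2))) f = -(sumL T L f) := by
  induction L with
  | nil => simp [sumL]
  | cons x l ih =>
    rw [List.map_cons, sumL_cons, sumL_cons, ih]
    simp [ev, neg_smul]
    ring

lemma BSfold_add (w : List ℕ+) (a b : MyR) :
    w.foldr (fun j g => BS j g) (a + b)
      = w.foldr (fun j g => BS j g) a + w.foldr (fun j g => BS j g) b := by
  induction w with
  | nil => rfl
  | cons j l ih => simp [List.foldr_cons, ih, map_add]

lemma BSfold_zero (w : List ℕ+) : w.foldr (fun j g => BS j g) (0 : MyR) = 0 := by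
  induction w with
  | nil => rfl
  | cons j l ih => simp [List.foldr_cons, ih]

lemma BSfold_smul (w : List ℕ+) (c : ℤ) (a : MyR) :
    w.foldr (fun j g => BS j g) (c • a) = c • w.foldr (fun j g => BS j g) a := by
  induction w with
  | nil => rfl
  | cons j l ih => rw [List.foldr_cons, List.foldr_cons, ih, map_zsmul]

/-- Composition of triples. -/
def comp2 (x y : ℤ × List ℕ+ × IndexedForest) : ℤ × List ℕ+ × IndexedForest :=
  (x.1 * y.1, x.2.1 ++ y.2.1, y.2.2)

lemma ev_sumL (x : ℤ × List ℕ+ × IndexedForest) (L : List (ℤ × List ℕ+ × IndexedForest))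
    (f : MyR) :
    x.1 • x.2.1.foldr (fun j g => BS j g) (sumL T L f) = sumL T (L.map (comp2 x)) f := by
  induction L with
  | nil => simp [sumL_nil, BSfold_zero]
  | cons y l ih =>
    rw [List.map_cons, sumL_cons, sumL_cons, BSfold_add, smul_add, ih]
    congr 1
    show x.1 • x.2.1.foldr _ (ev T y f) = ev T (comp2 x y) f
    rw [ev, ev, comp2, BSfold_smul, smul_smul]
    congr 1
    exact (List.foldr_append).symm

/-- Gluing lemma: substitute representations for `Ĥ_G ∘ inner` into a sum. -/
lemma glue (P : IndexedForest → Prop) (inner : MyR → MyR) :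
    ∀ (L : List (ℤ × List ℕ+ × IndexedForest)),
      (∀ x ∈ L, ∃ L', (∀ y ∈ L', P y.2.2) ∧
        ∀ f, extract T 1 x.2.2 (inner f) = sumL T L' f) →
      ∃ L'', (∀ y ∈ L'', P y.2.2) ∧ ∀ f, sumL T L (inner f) = sumL T L'' f := by
  intro L
  induction L with
  | nil => intro _; exact ⟨[], fun y h => absurd h List.not_mem_nil, fun f => rfl⟩
  | cons x l ih =>
    intro H
    obtain ⟨Lx, hPx, hx⟩ := H x List.mem_cons_self
    obtain ⟨L2, hP2, h2⟩ := ih (fun z hz => H z (List.mem_cons_of_mem x hz))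
    refine ⟨Lx.map (comp2 x) ++ L2, ?_, ?_⟩
    · intro y hy
      rcases List.mem_append.mp hy with hy | hy
      · obtain ⟨z, hz, hzeq⟩ := List.mem_map.mp hy
        rw [← hzeq]
        exact hPx z hz
      · exact hP2 y hy
    · intro f
      rw [sumL_cons, sumL_append, h2]
      congr 1
      rw [ev, hx f]
      exact ev_sumL T x Lx f

end Reps

/-! ### The main induction -/

section Main

open ForestFacts

/-- Statement B: `Ĥ_F ∘ R_i` is a sum of `R_w ∘ Ĥ_G` with `|G| ≤ |F|`. -/
def StmtB (T : ℕ+ → MyR → MyR) (F : IndexedForest) (i : ℕ+) : Prop :=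
  ∃ L : List (ℤ × List ℕ+ × IndexedForest),
    (∀ y ∈ L, y.2.2.size ≤ F.size) ∧ ∀ f, extract T 1 F (BS i f) = sumL T L f

/-- Statement A: `Ĥ_G ∘ Ĥ^s_p` is a sum of `R_w ∘ Ĥ_K` with `|K| ≤ |G| + 1`. -/
def StmtA (T : ℕ+ → MyR → MyR) (G : IndexedForest) (p : ℕ+) (s : Bool) : Prop :=
  ∃ L : List (ℤ × List ℕ+ × IndexedForest),
    (∀ y ∈ L, y.2.2.size ≤ G.size + 1) ∧ ∀ f, extract T 1 G (stp T s p f) = sumL T L f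

variable {T : ℕ+ → MyR → MyR}
variable (hT : ∀ (i : ℕ+) (f : MyR), (X i : MyR) * T i f = BS (i + 1) f - BS i f)

lemma stmtB_empty (i : ℕ+) : StmtB T IndexedForest.empty i := by
  refine ⟨[(1, [i], IndexedForest.empty)], ?_, fun f => ?_⟩
  · intro y hy
    simp only [List.mem_singleton] at hy
    subst hy
    exact le_refl _
  · rw [extract_empty]
    simp [sumL, ev, extract_empty]

include hT

lemma stmtA_rec (n : ℕ) (hB : ∀ F i, F.size ≤ n → StmtB T F i) :
    ∀ (pp : ℕ) (p : ℕ+) (G : IndexedForest) (s : Bool), (p : ℕ) ≤ pp → G.size ≤ n →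
      StmtA T G p s := by
  intro pp
  induction pp using Nat.strong_induction_on with
  | _ pp ih =>
  intro p G s hp hG
  by_cases hval : ∀ q ∈ G.qdes, (p : ℕ) ≤ (q : ℕ) + 1
  · -- valid case: insert a terminal node at p
    obtain ⟨n₀, h1, h2⟩ := exists_tree G p
    have hmem := mem_qdes_splitF h1 h2
    have hmin : (splitF G p).minQDes = p := minQDes_eq hmem (qdes_splitF_ge h1 h2 hval)
    have hne' : splitF G p ≠ IndexedForest.empty := ne_empty_of_mem_qdes hmem
    have htrim : (splitF G p).trim p = G := trimF_splitF h1 h2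
    have hsize : (splitF G p).size = G.size + 1 := size_splitF h1 h2
    have hmatch : ∀ sb : Bool,
        (∀ f, extract T 1 (splitF G p) f = extract T 1 G (stp T sb p f)) →
        StmtA T G p sb := by
      intro sb hx'
      refine ⟨[(1, [], splitF G p)], ?_, fun f => ?_⟩
      · intro y hy
        simp only [List.mem_singleton] at hy
        subst hy
        simp [hsize]
      · rw [← hx' f]
        simp [sumL, ev]
    by_cases hside : (splitF G p).rightAt p
    · have hx' : ∀ f, extract T 1 (splitF G p) f = extract T 1 G (stp T true p f) := by
        intro f
        have h := extract_step (T := T) hne' f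
        rw [hmin, htrim, if_pos hside] at h
        exact h
      cases s
      · -- need `false`, forced `true` : Ĥ^L_p = Ĥ^R_p - R_{p+1} + R_p
        obtain ⟨L2, hs2, hL2⟩ := hB G (p + 1) hG
        obtain ⟨L3, hs3, hL3⟩ := hB G p hG
        refine ⟨(1, [], splitF G p) :: (L2.map (fun x => (-x.1, x.2)) ++ L3), ?_, fun f => ?_⟩
        · intro y hy
          rcases List.mem_cons.mp hy with hy | hy
          · subst hy; simp [hsize]
          rcases List.mem_append.mp hy with hy | hy
          · obtain ⟨z, hz, hzeq⟩ := List.mem_map.mp hy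
            rw [← hzeq]
            exact le_trans (hs2 z hz) (by omega)
          · exact le_trans (hs3 y hy) (by omega)
        · have hre : stp T false p f = stp T true p f - BS (p + 1) f + BS p f := by
            rw [stp_expand hT p f]; ring
          rw [hre, extract_add hT, extract_sub hT, hL2, hL3, ← hx' f,
            sumL_cons, sumL_append, sumL_neg]
          simp only [ev, one_smul, List.foldr_nil]
          ring
      · exact hmatch true hx'
    · have hx' : ∀ f, extract T 1 (splitF G p) f = extract T 1 G (stp T false p f) := by
        intro f
        have h := extract_step (T := T) hne' f
        rw [hmin, htrim, if_neg hside] at h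
        exact h
      cases s
      · exact hmatch false hx'
      · -- need `true`, forced `false` : Ĥ^R_p = Ĥ^L_p + R_{p+1} - R_p
        obtain ⟨L2, hs2, hL2⟩ := hB G (p + 1) hG
        obtain ⟨L3, hs3, hL3⟩ := hB G p hG
        refine ⟨(1, [], splitF G p) :: (L2 ++ L3.map (fun x => (-x.1, x.2))), ?_, fun f => ?_⟩
        · intro y hy
          rcases List.mem_cons.mp hy with hy | hy
          · subst hy; simp [hsize]
          rcases List.mem_append.mp hy with hy | hy
          · exact le_trans (hs2 y hy) (by omega)
          · obtain ⟨z, hz, hzeq⟩ := List.mem_map.mp hy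
            rw [← hzeq]
            exact le_trans (hs3 z hz) (by omega)
        · have hre : stp T true p f = stp T false p f + BS (p + 1) f - BS p f :=
            stp_expand hT p f
          rw [hre, extract_sub hT, extract_add hT, hL2, hL3, ← hx' f,
            sumL_cons, sumL_append, sumL_neg]
          simp only [ev, one_smul, List.foldr_nil]
          ring
  · -- invalid case: commute past the minimal descent
    push_neg at hval
    obtain ⟨q₀, hq₀, hlt⟩ := hval
    have hneG : G ≠ IndexedForest.empty := ne_empty_of_mem_qdes hq₀
    obtain ⟨hbmem, hbmin⟩ := minQDes_spec hneG
    have hbq : ((G.minQDes : ℕ+) : ℕ) ≤ (q₀ : ℕ) := (PNat.coe_le_coe _ _).mpr (hbmin q₀ hq₀)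
    have hbp : G.minQDes + 1 < p := by
      rw [← PNat.coe_lt_coe, PNat.add_coe, PNat.one_coe]
      omega
    obtain ⟨p₀, hbp₀, hpeq⟩ := exists_succ_of_lt hbp
    have hpco : (p : ℕ) = (p₀ : ℕ) + 1 := by rw [hpeq, PNat.add_coe, PNat.one_coe]
    have hsizetrim : (G.trim G.minQDes).size + 1 = G.size := size_trimF hbmem
    have hstep : ∃ sb : Bool, ∀ g,
        extract T 1 G g = extract T 1 (G.trim G.minQDes) (stp T sb G.minQDes g) := by
      by_cases hrb : G.rightAt G.minQDes
      · exact ⟨true, fun g => by rw [extract_step (T := T) hneG g, if_pos hrb]⟩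
      · exact ⟨false, fun g => by rw [extract_step (T := T) hneG g, if_neg hrb]⟩
    obtain ⟨sb, hstep⟩ := hstep
    have hp₀pp : (p₀ : ℕ) < pp := by omega
    obtain ⟨L1, hs1, hL1⟩ := ih (p₀ : ℕ) hp₀pp p₀ (G.trim G.minQDes) s le_rfl (by omega)
    have hbpp : ((G.minQDes : ℕ+) : ℕ) < pp := by
      rw [← PNat.coe_lt_coe, PNat.add_coe, PNat.one_coe] at hbp
      omega
    obtain ⟨L'', hP'', hL''⟩ := glue T (fun K => K.size ≤ G.size + 1) (stp T sb G.minQDes) L1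
      (fun x hx => by
        obtain ⟨L', hs', hL'⟩ := ih ((G.minQDes : ℕ+) : ℕ) hbpp G.minQDes x.2.2 sb le_rfl
          (le_trans (le_trans (hs1 x hx) (by omega)) hG)
        exact ⟨L', fun y hy => le_trans (hs' y hy)
          (by have := hs1 x hx; omega), hL'⟩)
    refine ⟨L'', hP'', fun f => ?_⟩
    calc extract T 1 G (stp T s p f)
        = extract T 1 (G.trim G.minQDes) (stp T sb G.minQDes (stp T s p f)) := hstep _
      _ = extract T 1 (G.trim G.minQDes) (stp T s p₀ (stp T sb G.minQDes f)) := by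
          rw [hpeq, stp_comm hT sb s hbp₀]
      _ = sumL T L1 (stp T sb G.minQDes f) := hL1 _
      _ = sumL T L'' f := hL'' f

lemma stmtB_all : ∀ (n : ℕ) (F : IndexedForest) (i : ℕ+), F.size ≤ n → StmtB T F i := by
  intro n
  induction n with
  | zero =>
    intro F i hF
    have hFe : F = IndexedForest.empty := by
      by_contra h
      have := size_pos h
      omega
    subst hFe
    exact stmtB_empty i
  | succ n ih =>
    intro F i hF
    by_cases hne : F = IndexedForest.empty
    · subst hne
      exact stmtB_empty i
    · obtain ⟨hjmem, _⟩ := minQDes_spec hne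
      have hsz : (F.trim F.minQDes).size + 1 = F.size := size_trimF hjmem
      have htrimsz : (F.trim F.minQDes).size ≤ n := by omega
      have hstep : ∃ sb : Bool, ∀ g,
          extract T 1 F g = extract T 1 (F.trim F.minQDes) (stp T sb F.minQDes g) := by
        by_cases hrb : F.rightAt F.minQDes
        · exact ⟨true, fun g => by rw [extract_step (T := T) hne g, if_pos hrb]⟩
        · exact ⟨false, fun g => by rw [extract_step (T := T) hne g, if_neg hrb]⟩
      obtain ⟨sb, hstep⟩ := hstep
      -- helper to glue an A-step onto a B-representation
      have hglue : ∀ (L1 : List (ℤ × List ℕ+ × IndexedForest)) (pA : ℕ+),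
          (∀ x ∈ L1, x.2.2.size ≤ (F.trim F.minQDes).size) →
          ∃ L'', (∀ y ∈ L'', y.2.2.size ≤ F.size) ∧
            ∀ f, sumL T L1 (stp T sb pA f) = sumL T L'' f := by
        intro L1 pA hs1
        exact glue T (fun K => K.size ≤ F.size) (stp T sb pA) L1
          (fun x hx => by
            obtain ⟨L', hs', hL'⟩ := stmtA_rec hT n ih ((pA : ℕ+) : ℕ) pA x.2.2 sb le_rfl
              (le_trans (hs1 x hx) htrimsz)
            exact ⟨L', fun y hy => le_trans (hs' y hy)
              (by have := hs1 x hx; omega), hL'⟩)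
      rcases lt_trichotomy ((F.minQDes : ℕ) + 1) (i : ℕ) with hij | hij | hij
      · -- i ≥ j + 2
        have hlt : F.minQDes + 1 < i := by
          rw [← PNat.coe_lt_coe, PNat.add_coe, PNat.one_coe]
          omega
        obtain ⟨i₀, hji₀, hieq⟩ := exists_succ_of_lt hlt
        obtain ⟨L1, hs1, hL1⟩ := ih (F.trim F.minQDes) i₀ htrimsz
        obtain ⟨L'', hP'', hL''⟩ := hglue L1 F.minQDes hs1
        refine ⟨L'', hP'', fun f => ?_⟩
        rw [hieq, hstep (BS (i₀ + 1) f), stp_BS_big hT sb hji₀,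
          hL1 (stp T sb F.minQDes f), hL'' f]
      · -- i = j + 1
        have hieq : i = F.minQDes + 1 := by
          apply PNat.coe_injective
          rw [PNat.add_coe, PNat.one_coe]
          omega
        obtain ⟨L1, hs1, hL1⟩ := ih (F.trim F.minQDes) (F.minQDes + 1) htrimsz
        obtain ⟨L2, hs2, hL2⟩ := ih (F.trim F.minQDes) F.minQDes htrimsz
        obtain ⟨La, hPa, hLa⟩ := hglue L1 F.minQDes hs1
        obtain ⟨Lb, hPb, hLb⟩ := hglue L2 (F.minQDes + 1) hs2
        refine ⟨La ++ Lb, ?_, fun f => ?_⟩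
        · intro y hy
          rcases List.mem_append.mp hy with hy | hy
          · exact hPa y hy
          · exact hPb y hy
        · rw [hieq, hstep (BS (F.minQDes + 1) f), stp_BS_mid hT sb F.minQDes f,
            extract_add hT, hL1 (stp T sb F.minQDes f), hL2 (stp T sb (F.minQDes + 1) f),
            hLa f, hLb f, sumL_append]
      · -- i ≤ j
        have hile : i ≤ F.minQDes := by
          rw [← PNat.coe_le_coe]
          omega
        obtain ⟨L1, hs1, hL1⟩ := ih (F.trim F.minQDes) i htrimsz
        obtain ⟨L'', hP'', hL''⟩ := hglue L1 (F.minQDes + 1) hs1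
        refine ⟨L'', hP'', fun f => ?_⟩
        rw [hstep (BS i f), stp_BS_small hT sb hile, hL1 (stp T sb (F.minQDes + 1) f), hL'' f]

end Main

/-! ### Constant term facts and list-sum conversion -/

lemma constCoeff_BS (j : ℕ+) (g : MyR) : constantCoeff (BS j g) = constantCoeff g := by
  have key : (RingHom.toIntAlgHom (constantCoeff : MvPolynomial ℕ+ ℤ →+* ℤ)).comp (BS j)
      = RingHom.toIntAlgHom (constantCoeff : MvPolynomial ℕ+ ℤ →+* ℤ) := by
    apply MvPolynomial.algHom_ext
    intro k
    show constantCoeff (BS j (X k)) = constantCoeff (X k)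
    rw [BS_X]
    split_ifs <;> simp
  exact DFunLike.congr_fun key g

lemma constCoeff_BSfold (w : List ℕ+) (g : MyR) :
    constantCoeff (w.foldr (fun j g => BS j g) g) = constantCoeff g := by
  induction w with
  | nil => rfl
  | cons j l ih => rw [List.foldr_cons, constCoeff_BS, ih]










end Stmt9Aux

/-- β = 1: any `Ĥ_F ∘ R_i` can be rewritten as a `ℤ`-linear
combination of operators `R_(w(1)) ∘ ⋯ ∘ R_(w(t)) ∘ Ĥ_G`; in particular
`ct ∘ Ĥ_F ∘ R_i` is a `ℤ`-linear combination of the `ct ∘ Ĥ_G`. -/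
theorem stmt9 (T : ℕ+ → MyR → MyR)
    (hT : ∀ (i : ℕ+) (f : MyR), (X i : MyR) * T i f = BS (i + 1) f - BS i f)
    (F : IndexedForest) (i : ℕ+) :
    ∃ (N : ℕ) (c : Fin N → ℤ) (w : Fin N → List ℕ+) (G : Fin N → IndexedForest),
      (∀ f : MyR, extract T 1 F (BS i f) =
        ∑ m : Fin N, c m • (w m).foldr (fun j g => BS j g)
          (extract T 1 (G m) f)) ∧
      (∀ f : MyR, constantCoeff (extract T 1 F (BS i f)) =
        ∑ m : Fin N, c m * constantCoeff (extract T 1 (G m) f)) := by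
  classical
  obtain ⟨L, hsz, hL⟩ := Stmt9Aux.stmtB_all hT F.size F i le_rfl
  have hmain : ∀ f : MyR, extract T 1 F (BS i f) =
      ∑ m : Fin L.length, (L.get m).1 • ((L.get m).2.1).foldr (fun j g => BS j g)
        (extract T 1 (L.get m).2.2 f) := by
    intro f
    rw [hL f]
    show (L.map (fun x => Stmt9Aux.ev T x f)).sum = _
    conv_lhs => rw [← List.ofFn_get L, List.map_ofFn, List.sum_ofFn]
    exact Finset.sum_congr rfl (fun m _ => rfl)
  refine ⟨L.length, fun m => (L.get m).1, fun m => (L.get m).2.1, fun m => (L.get m).2.2,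
    hmain, fun f => ?_⟩
  rw [hmain f, map_sum]
  refine Finset.sum_congr rfl (fun m _ => ?_)
  rw [map_zsmul, Stmt9Aux.constCoeff_BSfold, smul_eq_mul]
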